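/- If a clause C = p ∨ C' is a blocked clause for literal p with respect to a CNF Γ (i.e., for every clause D of the form ¬p ∨ D' in Γ, the set C' ∪ D' contains a complementary pair of literals), then Γ and Γ ∪ {C} are equisatisfiable. -/
import Mathlib


open Classical

abbrev Var := ℕ
abbrev Lit := Var × Bool

def negLit (l : Lit) : Lit := (l.1, !l.2)

abbrev Clause := Finset Lit

/-- A set of literals is tautological if it contains a complementary pair. -/
def Tauto (S : Finset Lit) : Prop := ∃ l ∈ S, negLit l ∈ S

abbrev CNF := Set Clause

abbrev Assign := Var → Bool

def SatLit (α : Assign) (l : Lit) : Prop := α l.1 = l.2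
def SatClause (α : Assign) (C : Clause) : Prop := ∃ l ∈ C, SatLit α l
def SatCNF (α : Assign) (Γ : CNF) : Prop := ∀ C ∈ Γ, SatClause α C
def Satisfiable (Γ : CNF) : Prop := ∃ α, SatCNF α Γ
def Equisat (Γ Δ : CNF) : Prop := Satisfiable Γ ↔ Satisfiable Δ

/-- `C` is a blocked clause for the literal `p` with respect to `Γ`. -/
def Blocked (C : Clause) (p : Lit) (Γ : CNF) : Prop :=
  p ∈ C ∧ ∀ D ∈ Γ, negLit p ∈ D → Tauto (C.erase p ∪ D.erase (negLit p))

def negSet (L : Finset Lit) : Finset Lit := L.image negLit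

/-- `C` is a set-blocked clause for `L` with respect to `Γ`. -/
def SetBlocked (C : Clause) (L : Finset Lit) (Γ : CNF) : Prop :=
  L.Nonempty ∧ L ⊆ C ∧
    ∀ D ∈ Γ, (D ∩ negSet L).Nonempty → D ∩ L = ∅ →
      Tauto ((C \ L) ∪ (D \ negSet L))

def varsClause (C : Clause) : Finset Var := C.image Prod.fst
def varsCNF (Γ : CNF) : Set Var := {v | ∃ C ∈ Γ, v ∈ varsClause C}

/-- Partial assignments. -/
abbrev PAssign := Var → Option Bool

def restrictClause (α : PAssign) (C : Clause) : Clause :=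
  C.filter fun l => α l.1 ≠ some (!l.2)

def PSatClause' (α : PAssign) (C : Clause) : Prop := ∃ l ∈ C, α l.1 = some l.2

def restrictCNF (α : PAssign) (Γ : CNF) : CNF :=
  {E | ∃ C ∈ Γ, ¬ PSatClause' α C ∧ E = restrictClause α C}

/-- `E` is a resolvent of `F` and `G`. -/
def Resolvent (E F G : Clause) : Prop :=
  ∃ (x : Var) (A B : Clause), x ∉ varsClause A ∧ x ∉ varsClause B ∧
    F = insert (x, true) A ∧ G = insert (x, false) B ∧
    E = A ∪ B ∧ ¬ Tauto (A ∪ B)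

/-- One step of a resolution proof: add a resolvent or a weakening. -/
def ResStep (Γ Γ' : CNF) : Prop :=
  ∃ C, Γ' = Γ ∪ {C} ∧
    ((∃ F ∈ Γ, ∃ G ∈ Γ, Resolvent C F G) ∨ (∃ D ∈ Γ, D ⊆ C ∧ ¬ Tauto C))

/-- A resolution proof (refutation) of `Γ`. -/
def ResProofOf (Γ : CNF) (prf : List CNF) : Prop :=
  prf.head? = some Γ ∧ (∃ Δ, prf.getLast? = some Δ ∧ (∅ : Clause) ∈ Δ) ∧
    List.Chain' ResStep prf

/-- One step of a unit propagation proof: resolve against a unit clause, or weaken. -/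
def UnitStep (Γ Γ' : CNF) : Prop :=
  ∃ C, Γ' = Γ ∪ {C} ∧
    ((∃ l, ({negLit l} : Clause) ∈ Γ ∧ l.1 ∉ varsClause C ∧ insert l C ∈ Γ)
      ∨ (∃ D ∈ Γ, D ⊆ C ∧ ¬ Tauto C))

/-- `Γ` has a unit propagation refutation. -/
def UPRefutes (Γ : CNF) : Prop :=
  ∃ prf : List CNF, prf.head? = some Γ ∧ (∃ Δ, prf.getLast? = some Δ ∧ (∅ : Clause) ∈ Δ) ∧
    List.Chain' UnitStep prf

def negUnits (L : Finset Lit) : CNF := {C | ∃ p ∈ L, C = {negLit p}}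

/-- `Γ ⊢₁ C`. -/
def UPDerives (Γ : CNF) (C : Clause) : Prop := UPRefutes (Γ ∪ negUnits C)

/-- Partial assignments as consistent sets of literals. -/
def Consistent (α : Set Lit) : Prop := ∀ l ∈ α, negLit l ∉ α
def PSatClause (α : Set Lit) (C : Clause) : Prop := ∃ l ∈ C, l ∈ α
def PSatCNF (α : Set Lit) (Γ : CNF) : Prop := ∀ C ∈ Γ, PSatClause α C
def MinSat (α : Set Lit) (Γ : CNF) : Prop :=
  Consistent α ∧ PSatCNF α Γ ∧ ∀ β ⊂ α, ¬ PSatCNF β Γ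

/-- `μ(Γ)`: clauses whose negation minimally satisfies `Γ`. -/
def mu (Γ : CNF) : CNF := {E | MinSat (↑(E.image negLit)) Γ}

/-- Projection of `Γ` onto a literal. -/
def proj (p : Lit) (Γ : CNF) : CNF := {E | ∃ D ∈ Γ, p ∈ D ∧ E = D.erase p}

/-- blocked clauses are redundant. -/
theorem blocked_equisat (Γ : CNF) (C : Clause) (p : Lit)
    (hC : ¬ Tauto C) (hΓ : ∀ D ∈ Γ, ¬ Tauto D)
    (hb : Blocked C p Γ) :
    Equisat Γ (Γ ∪ {C}) := by
  obtain ⟨hpC, hbl⟩ := hb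
  constructor
  · rintro ⟨α, hα⟩
    by_cases hsat : SatClause α C
    · exact ⟨α, fun D hD => hD.elim (hα D) (fun h => by simpa [Set.mem_singleton_iff.mp h] using hsat)⟩
    · -- flip α at p.1
      set α' : Assign := Function.update α p.1 p.2 with hα'
      have hαp : α p.1 = !p.2 := by
        have : ¬ SatLit α p := fun h => hsat ⟨p, hpC, h⟩
        simp only [SatLit] at this
        cases h : α p.1 <;> cases h2 : p.2 <;> simp_all
      have hCsat : SatClause α' C := ⟨p, hpC, by simp [SatLit, hα']⟩
      refine ⟨α', fun D hD => ?_⟩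
      rcases hD with hD | hD
      swap
      · simpa [Set.mem_singleton_iff.mp hD] using hCsat
      obtain ⟨l, hlD, hl⟩ := hα D hD
      by_cases hlp : l.1 = p.1
      · -- l must be negLit p
        have hlval : l = negLit p := by
          have : α l.1 = l.2 := hl
          rw [hlp, hαp] at this
          exact Prod.ext hlp this.symm
        have hnpD : negLit p ∈ D := hlval ▸ hlD
        obtain ⟨q, hq, hnq⟩ := hbl D hD hnpD
        -- q and negLit q are in C.erase p ∪ D.erase (negLit p)
        -- one of them is in C, the other in D (since C, D not tauto)
        have key : ∀ r : Lit, r ∈ C.erase p → negLit r ∈ D.erase (negLit p) → SatClause α' D := by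
          intro r hrC hrD
          have hrC' : r ∈ C := Finset.mem_of_mem_erase hrC
          have hrp : r ≠ p := Finset.ne_of_mem_erase hrC
          have hrnp : r ≠ negLit p := by
            intro h
            exact hC ⟨p, hpC, by rw [← h]; exact hrC'⟩
          have hr1 : r.1 ≠ p.1 := by
            intro h
            rcases Bool.eq_or_eq_not r.2 p.2 with h2 | h2
            · exact hrp (Prod.ext h h2)
            · exact hrnp (Prod.ext h (by simp [negLit, h2]))
          have : ¬ SatLit α r := fun h => hsat ⟨r, hrC', h⟩
          simp only [SatLit] at this
          have hαr : α r.1 = !r.2 := by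
            cases h : α r.1 <;> cases h2 : r.2 <;> simp_all
          refine ⟨negLit r, Finset.mem_of_mem_erase hrD, ?_⟩
          simp [SatLit, negLit, hα', Function.update_of_ne hr1, hαr]
        rcases Finset.mem_union.mp hq with hq1 | hq1
        · rcases Finset.mem_union.mp hnq with hq2 | hq2
          · exact absurd ⟨q, Finset.mem_of_mem_erase hq1, Finset.mem_of_mem_erase hq2⟩ hC
          · exact key q hq1 hq2
        · rcases Finset.mem_union.mp hnq with hq2 | hq2
          · refine key (negLit q) hq2 ?_
            simpa [negLit] using hq1
          · exact absurd ⟨q, Finset.mem_of_mem_erase hq1, Finset.mem_of_mem_erase hq2⟩ (hΓ D hD)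
      · exact ⟨l, hlD, by simpa [SatLit, hα', Function.update_of_ne hlp] using hl⟩
  · rintro ⟨α, hα⟩
    exact ⟨α, fun D hD => hα D (Or.inl hD)⟩
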